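/- The region D = {(A,F,M) ∈ ℝ³ : 0 ≤ A ≤ K_a, 0 ≤ F ≤ ψθK_a/μ_fu, 0 ≤ M ≤ ψ(1−θ)K_a/μ_mu} is positively invariant for the single-population mosquito model: if x : [0,∞) → ℝ³ is differentiable and satisfies x'(t) = f(x(t)) for all t ≥ 0, where f is the model's vector field, and x(0) ∈ D, then x(t) ∈ D for all t ≥ 0. -/

import Mathlib

set_option maxHeartbeats 1000000
open Filter Set Topology



/-- The single-population mosquito model vector field on `(A, F, M)`
(indices 0, 1, 2). -/
noncomputable def mosqField (φ ψ μa μfu μmu Ka θ : ℝ) (x : Fin 3 → ℝ) :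
    Fin 3 → ℝ :=
  ![φ * x 1 * (1 - x 0 / Ka) - (μa + ψ) * x 0,
    θ * ψ * x 0 - μfu * x 1,
    (1 - θ) * ψ * x 0 - μmu * x 2]

lemma slope_helper {g : ℝ → ℝ} {d s V r : ℝ} (hg : HasDerivAt g d s)
    (hgs : g s ≤ V) (hd : g s = V → d < r) (hr : 0 < r) :
    ∀ᶠ z in 𝓝[>] s, g z < V + r * (z - s) := by
  rcases eq_or_lt_of_le hgs with h | h
  · have hdr := hd h
    have hslope : Tendsto (slope g s) (𝓝[≠] s) (𝓝 d) :=
      hasDerivAt_iff_tendsto_slope.mp hg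
    have h2 : ∀ᶠ z in 𝓝[≠] s, slope g s z < r := hslope.eventually_lt_const hdr
    have h3 : ∀ᶠ z in 𝓝[>] s, slope g s z < r :=
      h2.filter_mono (nhdsWithin_mono s fun z hz => hz.ne')
    filter_upwards [h3, self_mem_nhdsWithin] with z hz1 hz2
    rw [slope_def_field] at hz1
    have hzs : (0:ℝ) < z - s := by simpa [sub_pos] using hz2
    have := (div_lt_iff₀ hzs).1 hz1
    nlinarith [this]
  · have h2 : ∀ᶠ z in 𝓝 s, g z < V := hg.continuousAt.tendsto.eventually_lt_const h
    filter_upwards [nhdsWithin_le_nhds h2, self_mem_nhdsWithin] with z hz1 hz2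
    have hzs : (0:ℝ) < z - s := by simpa [sub_pos] using hz2
    nlinarith [mul_pos hr hzs]

/-- the box `D` is positively invariant for the single-population
mosquito model. -/
theorem mosquito_region_positively_invariant
    (φ ψ μa μfu μmu Ka θ : ℝ)
    (hφ : 0 < φ) (hψ : 0 < ψ) (hμa : 0 < μa) (hμfu : 0 < μfu)
    (hμmu : 0 < μmu) (hKa : 0 < Ka) (hθ0 : 0 < θ) (hθ1 : θ < 1)
    (D : Set (Fin 3 → ℝ))
    (hD : D = {x | 0 ≤ x 0 ∧ x 0 ≤ Ka ∧ 0 ≤ x 1 ∧ x 1 ≤ ψ * θ * Ka / μfu ∧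
      0 ≤ x 2 ∧ x 2 ≤ ψ * (1 - θ) * Ka / μmu})
    (x : ℝ → (Fin 3 → ℝ))
    (hx : ∀ t, 0 ≤ t → HasDerivAt x (mosqField φ ψ μa μfu μmu Ka θ (x t)) t)
    (hx0 : x 0 ∈ D) :
    ∀ t, 0 ≤ t → x t ∈ D := by
  intro t ht
  subst hD
  set Cf : ℝ := ψ * θ * Ka / μfu with hCf
  set Cm : ℝ := ψ * (1 - θ) * Ka / μmu with hCm
  have hCf' : μfu * Cf = ψ * θ * Ka := by
    rw [hCf]; field_simp
  have hCm' : μmu * Cm = ψ * (1 - θ) * Ka := by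
    rw [hCm]; field_simp
  -- coordinate derivatives
  have hA : ∀ s, 0 ≤ s → HasDerivAt (fun u => x u 0)
      (φ * x s 1 * (1 - x s 0 / Ka) - (μa + ψ) * x s 0) s := by
    intro s hs
    have := (hasDerivAt_pi.1 (hx s hs)) 0
    simpa [mosqField] using this
  have hF : ∀ s, 0 ≤ s → HasDerivAt (fun u => x u 1)
      (θ * ψ * x s 0 - μfu * x s 1) s := by
    intro s hs
    have := (hasDerivAt_pi.1 (hx s hs)) 1
    simpa [mosqField] using this
  have hM : ∀ s, 0 ≤ s → HasDerivAt (fun u => x u 2)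
      ((1 - θ) * ψ * x s 0 - μmu * x s 2) s := by
    intro s hs
    have := (hasDerivAt_pi.1 (hx s hs)) 2
    simpa [mosqField] using this
  -- the violation function
  obtain ⟨V, hV⟩ : ∃ V : ℝ → ℝ, V = fun s => max 0 (max (max (-(x s 0)) (x s 0 - Ka))
      (max (max (-(x s 1)) (x s 1 - Cf)) (max (-(x s 2)) (x s 2 - Cm)))) := ⟨_, rfl⟩
  have hV0 : ∀ s, 0 ≤ V s := fun s => by
    simp only [hV]; exact le_max_left _ _
  have hVa : ∀ s, -(x s 0) ≤ V s := fun s => by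
    simp only [hV]
    exact le_max_of_le_right (le_max_of_le_left (le_max_left _ _))
  have hVa' : ∀ s, x s 0 - Ka ≤ V s := fun s => by
    simp only [hV]
    exact le_max_of_le_right (le_max_of_le_left (le_max_right _ _))
  have hVb : ∀ s, -(x s 1) ≤ V s := fun s => by
    simp only [hV]
    exact le_max_of_le_right (le_max_of_le_right (le_max_of_le_left (le_max_left _ _)))
  have hVb' : ∀ s, x s 1 - Cf ≤ V s := fun s => by
    simp only [hV]
    exact le_max_of_le_right (le_max_of_le_right (le_max_of_le_left (le_max_right _ _)))
  have hVc : ∀ s, -(x s 2) ≤ V s := fun s => by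
    simp only [hV]
    exact le_max_of_le_right (le_max_of_le_right (le_max_of_le_right (le_max_left _ _)))
  have hVc' : ∀ s, x s 2 - Cm ≤ V s := fun s => by
    simp only [hV]
    exact le_max_of_le_right (le_max_of_le_right (le_max_of_le_right (le_max_right _ _)))
  -- continuity of V on [0, t]
  have hxc : ∀ i : Fin 3, ∀ s : ℝ, 0 ≤ s → ContinuousAt (fun u => x u i) s := by
    intro i s hs
    exact (continuous_apply i).continuousAt.comp (hx s hs).continuousAt
  have hVcont : ContinuousOn V (Icc 0 t) := by
    intro s hs
    rw [hV]
    have h0 := (hxc 0 s hs.1).continuousWithinAt (s := Icc 0 t)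
    have h1 := (hxc 1 s hs.1).continuousWithinAt (s := Icc 0 t)
    have h2 := (hxc 2 s hs.1).continuousWithinAt (s := Icc 0 t)
    exact (continuousWithinAt_const.max (((h0.neg).max (h0.sub continuousWithinAt_const)).max
      (((h1.neg).max (h1.sub continuousWithinAt_const)).max
      ((h2.neg).max (h2.sub continuousWithinAt_const)))))
  -- a bound for V on [0, t]
  obtain ⟨z₀, hz₀, hz₀max⟩ := isCompact_Icc.exists_isMaxOn ⟨0, by constructor <;> linarith⟩ hVcont
  set R : ℝ := V z₀ with hR
  have hR0 : 0 ≤ R := hV0 z₀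
  have hVR : ∀ s ∈ Icc (0:ℝ) t, V s ≤ R := fun s hs => hz₀max hs
  set K : ℝ := φ + φ * R / Ka + ψ + 1 with hK
  have hK0 : 0 < K := by
    have : 0 ≤ φ * R / Ka := by positivity
    rw [hK]; linarith
  have ha : V 0 ≤ 0 := by
    obtain ⟨h1, h2, h3, h4, h5, h6⟩ := hx0
    rw [hV]
    apply max_le le_rfl
    apply max_le (max_le (by linarith) (by linarith))
    exact max_le (max_le (by linarith) (by linarith)) (max_le (by linarith) (by linarith))
  have key := le_gronwallBound_of_liminf_deriv_right_le (f := V) (f' := fun s => K * V s)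
    (δ := 0) (K := K) (ε := 0) (a := 0) (b := t) hVcont ?_ ha ?_
  · have := key t ⟨ht, le_rfl⟩
    rw [gronwallBound_ε0_δ0] at this
    refine ⟨?_, ?_, ?_, ?_, ?_, ?_⟩
    · have := hVa t; linarith
    · have := hVa' t; linarith
    · have := hVb t; linarith
    · have := hVb' t; linarith
    · have := hVc t; linarith
    · have := hVc' t; linarith
  · -- the liminf slope condition
    intro s hs r hr
    have hr' : K * V s < r := hr
    have hs0 : 0 ≤ s := hs.1
    have hVs0 : 0 ≤ V s := hV0 s
    have hr0 : 0 < r := lt_of_le_of_lt (by positivity) hr'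
    have hsI : s ∈ Icc (0:ℝ) t := ⟨hs.1, hs.2.le⟩
    have hVsR : V s ≤ R := hVR s hsI
    have hb : -x s 1 ≤ V s := hVb s
    have hav : -x s 0 ≤ V s := hVa s
    have hav' : x s 0 - Ka ≤ V s := hVa' s
    have d1le : -x s 0 = V s →
        -(φ * x s 1 * (1 - x s 0 / Ka) - (μa + ψ) * x s 0) ≤ K * V s := by
      intro hact
      have haA : x s 0 = -(V s) := by linarith
      rw [haA, hK]
      have e1 : 0 ≤ φ * ((x s 1 + V s) * (1 + V s / Ka)) :=
        mul_nonneg hφ.le (mul_nonneg (by linarith) (by positivity))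
      have e2 : 0 ≤ φ * (V s / Ka * (R - V s)) :=
        mul_nonneg hφ.le (mul_nonneg (by positivity) (by linarith))
      have e3 : 0 ≤ (μa + ψ) * V s := by positivity
      simp only [div_eq_mul_inv] at e1 e2 ⊢
      generalize Ka⁻¹ = u at e1 e2 ⊢
      nlinarith [e1, e2, e3, hVs0, mul_nonneg hψ.le hVs0]
    have d2le : x s 0 - Ka = V s →
        φ * x s 1 * (1 - x s 0 / Ka) - (μa + ψ) * x s 0 ≤ K * V s := by
      intro hact
      have haA : x s 0 = Ka + V s := by linarith
      have hdiv : (1 : ℝ) - (Ka + V s) / Ka = -(V s / Ka) := by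
        field_simp
        ring
      rw [haA, hdiv, hK]
      have e1 : 0 ≤ φ * ((x s 1 + V s) * (V s / Ka)) :=
        mul_nonneg hφ.le (mul_nonneg (by linarith) (by positivity))
      have e2 : 0 ≤ φ * (V s / Ka * (R - V s)) :=
        mul_nonneg hφ.le (mul_nonneg (by positivity) (by linarith))
      have e3 : 0 ≤ (μa + ψ) * (Ka + V s) :=
        mul_nonneg (by positivity) (by linarith)
      simp only [div_eq_mul_inv] at e1 e2 ⊢
      generalize Ka⁻¹ = u at e1 e2 ⊢
      nlinarith [e1, e2, e3, hVs0, mul_nonneg hψ.le hVs0, mul_nonneg hφ.le hVs0]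
    have eθ : 0 ≤ (1 - θ) * (ψ * V s) :=
      mul_nonneg (by linarith) (mul_nonneg hψ.le hVs0)
    have eθ' : 0 ≤ θ * (ψ * V s) :=
      mul_nonneg hθ0.le (mul_nonneg hψ.le hVs0)
    have eRK : 0 ≤ φ * R / Ka * V s := by positivity
    have d3le : -x s 1 = V s → -(θ * ψ * x s 0 - μfu * x s 1) ≤ K * V s := by
      intro hact
      have hbF : x s 1 = -(V s) := by linarith
      rw [hbF, hK]
      have e1 : 0 ≤ θ * ψ * (x s 0 + V s) :=
        mul_nonneg (by positivity) (by linarith)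
      simp only [div_eq_mul_inv] at eRK ⊢
      generalize Ka⁻¹ = u at eRK ⊢
      nlinarith [e1, eθ, eRK, mul_nonneg hμfu.le hVs0, mul_nonneg hφ.le hVs0]
    have d4le : x s 1 - Cf = V s → θ * ψ * x s 0 - μfu * x s 1 ≤ K * V s := by
      intro hact
      have hbF : x s 1 = Cf + V s := by linarith
      rw [hbF, hK]
      have e1 : 0 ≤ θ * ψ * (Ka + V s - x s 0) :=
        mul_nonneg (by positivity) (by linarith)
      simp only [div_eq_mul_inv] at eRK ⊢
      generalize Ka⁻¹ = u at eRK ⊢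
      nlinarith [e1, eθ, eRK, hCf', mul_nonneg hμfu.le hVs0,
        mul_nonneg hφ.le hVs0]
    have d5le : -x s 2 = V s → -((1 - θ) * ψ * x s 0 - μmu * x s 2) ≤ K * V s := by
      intro hact
      have hcM : x s 2 = -(V s) := by linarith
      rw [hcM, hK]
      have e1 : 0 ≤ (1 - θ) * ψ * (x s 0 + V s) :=
        mul_nonneg (mul_nonneg (by linarith) hψ.le) (by linarith)
      simp only [div_eq_mul_inv] at eRK ⊢
      generalize Ka⁻¹ = u at eRK ⊢
      nlinarith [e1, eθ', eRK, mul_nonneg hμmu.le hVs0, mul_nonneg hφ.le hVs0]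
    have d6le : x s 2 - Cm = V s → (1 - θ) * ψ * x s 0 - μmu * x s 2 ≤ K * V s := by
      intro hact
      have hcM : x s 2 = Cm + V s := by linarith
      rw [hcM, hK]
      have e1 : 0 ≤ (1 - θ) * ψ * (Ka + V s - x s 0) :=
        mul_nonneg (mul_nonneg (by linarith) hψ.le) (by linarith)
      simp only [div_eq_mul_inv] at eRK ⊢
      generalize Ka⁻¹ = u at eRK ⊢
      nlinarith [e1, eθ', eRK, hCm', mul_nonneg hμmu.le hVs0,
        mul_nonneg hφ.le hVs0]
    have h1 := slope_helper ((hA s hs0).neg) (hVa s)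
      (fun hact => lt_of_le_of_lt (d1le hact) hr') hr0
    have h2 := slope_helper ((hA s hs0).sub_const Ka) (hVa' s)
      (fun hact => lt_of_le_of_lt (d2le hact) hr') hr0
    have h3 := slope_helper ((hF s hs0).neg) (hVb s)
      (fun hact => lt_of_le_of_lt (d3le hact) hr') hr0
    have h4 := slope_helper ((hF s hs0).sub_const Cf) (hVb' s)
      (fun hact => lt_of_le_of_lt (d4le hact) hr') hr0
    have h5 := slope_helper ((hM s hs0).neg) (hVc s)
      (fun hact => lt_of_le_of_lt (d5le hact) hr') hr0
    have h6 := slope_helper ((hM s hs0).sub_const Cm) (hVc' s)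
      (fun hact => lt_of_le_of_lt (d6le hact) hr') hr0
    apply Filter.Eventually.frequently
    filter_upwards [h1, h2, h3, h4, h5, h6, self_mem_nhdsWithin]
      with z hz1 hz2 hz3 hz4 hz5 hz6 hzs
    have hzs' : (0:ℝ) < z - s := by simpa [sub_pos] using hzs
    have h0 : (0:ℝ) < V s + r * (z - s) := by nlinarith [mul_pos hr0 hzs']
    have hVz : V z < V s + r * (z - s) := by
      have step := max_lt h0 (max_lt (max_lt hz1 hz2)
        (max_lt (max_lt hz3 hz4) (max_lt hz5 hz6)))
      conv_lhs => rw [hV]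
      exact step
    show (z - s)⁻¹ * (V z - V s) < r
    rw [inv_mul_lt_iff₀ hzs']
    linarith
  · -- the trivial bound
    intro s _
    simp
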